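/- Let B > 0, λ_n = n - B√n with λ_n > 0. Define g_n(k) = λ_n^k/k! for 0 ≤ k ≤ n and g_n(k) = (λ_n^n/n!)(λ_n/n)^{k-n} for k > n. Then for all sufficiently large n (depending only on B), for every k ≥ 0, g_n(k)·n!/λ_n^n ≤ (1 + n^{-1/4})·e^{B²}. -/

import Mathlib

set_option maxHeartbeats 1000000
lemma aux_fact (m : ℕ) : ∀ n, m ≤ n → n.factorial ≤ m.factorial * n ^ (n - m) := by
  intro n
  induction n with
  | zero => intro h; interval_cases m; simp
  | succ n ih =>
    intro h
    rcases Nat.eq_or_lt_of_le h with h' | h'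
    · simp [h']
    · have hmn : m ≤ n := Nat.lt_succ_iff.mp h'
      have h1 : n.factorial ≤ m.factorial * n ^ (n - m) := ih hmn
      have h2 : n ^ (n - m) ≤ (n+1) ^ (n - m) := Nat.pow_le_pow_left (by omega) _
      have h3 : n + 1 - m = (n - m) + 1 := by omega
      calc (n+1).factorial = (n+1) * n.factorial := rfl
        _ ≤ (n+1) * (m.factorial * (n+1) ^ (n - m)) := by
            exact Nat.mul_le_mul_left _ (le_trans h1 (Nat.mul_le_mul_left _ h2))
        _ = m.factorial * (n+1) ^ (n + 1 - m) := by rw [h3, pow_succ]; ring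

lemma aux_pois (lam : ℝ) (hlam : 0 < lam) (k : ℕ) :
    lam ^ k / (Nat.factorial k) ≤ lam ^ ⌊lam⌋₊ / (Nat.factorial ⌊lam⌋₊) := by
  set m := ⌊lam⌋₊ with hm
  have hml : (m : ℝ) ≤ lam := Nat.floor_le hlam.le
  have hml1 : lam < m + 1 := Nat.lt_floor_add_one lam
  have fpos : ∀ j : ℕ, (0:ℝ) < (Nat.factorial j) := fun j => by
    exact_mod_cast j.factorial_pos
  have up : ∀ j : ℕ, (j:ℝ) + 1 ≤ lam →
      lam ^ j / (Nat.factorial j) ≤ lam ^ (j+1) / (Nat.factorial (j+1)) := by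
    intro j hj
    rw [div_le_div_iff₀ (fpos j) (fpos (j+1))]
    have : ((Nat.factorial (j+1)) : ℝ) = ((j:ℝ)+1) * (Nat.factorial j) := by
      push_cast [Nat.factorial_succ]; ring
    rw [this, pow_succ]
    have h2 := mul_le_mul_of_nonneg_left hj (show (0:ℝ) ≤ lam ^ j * (Nat.factorial j) by positivity)
    nlinarith [h2]
  have down : ∀ j : ℕ, lam ≤ (j:ℝ) + 1 →
      lam ^ (j+1) / (Nat.factorial (j+1)) ≤ lam ^ j / (Nat.factorial j) := by
    intro j hj
    rw [div_le_div_iff₀ (fpos (j+1)) (fpos j)]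
    have : ((Nat.factorial (j+1)) : ℝ) = ((j:ℝ)+1) * (Nat.factorial j) := by
      push_cast [Nat.factorial_succ]; ring
    rw [this, pow_succ]
    have h2 := mul_le_mul_of_nonneg_left hj (show (0:ℝ) ≤ lam ^ j * (Nat.factorial j) by positivity)
    nlinarith [h2]
  rcases le_or_gt k m with hk | hk
  · have key : ∀ d j, j + d = m → lam ^ j / (Nat.factorial j) ≤ lam ^ m / (Nat.factorial m) := by
      intro d
      induction d with
      | zero => intro j hj; simp at hj; subst hj; exact le_refl _
      | succ d ih =>
        intro j hj
        have h1 : (j:ℝ) + 1 ≤ lam := by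
          have : j + 1 ≤ m := by omega
          calc (j:ℝ) + 1 = ((j+1 : ℕ) : ℝ) := by push_cast; ring
            _ ≤ (m:ℝ) := by exact_mod_cast this
            _ ≤ lam := hml
        exact le_trans (up j h1) (ih (j+1) (by omega))
    exact key (m - k) k (by omega)
  · have key : ∀ d, lam ^ (m + d) / (Nat.factorial (m + d)) ≤ lam ^ m / (Nat.factorial m) := by
      intro d
      induction d with
      | zero => exact le_refl _
      | succ d ih =>
        have h1 : lam ≤ ((m + d : ℕ):ℝ) + 1 := by
          push_cast
          nlinarith [Nat.cast_nonneg (α := ℝ) d]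
        calc lam ^ (m + (d+1)) / (Nat.factorial (m + (d+1)))
            = lam ^ ((m+d)+1) / (Nat.factorial ((m+d)+1)) := by ring_nf
          _ ≤ lam ^ (m+d) / (Nat.factorial (m+d)) := down (m+d) h1
          _ ≤ _ := ih
    have := key (k - m)
    rwa [Nat.add_sub_cancel' hk.le] at this

theorem stmt_16 (B : ℝ) (hB : 0 < B) :
    ∃ N : ℕ, ∀ n : ℕ, N ≤ n → 0 < (n : ℝ) - B * Real.sqrt n →
      ∀ k : ℕ,
        (if k ≤ n then ((n : ℝ) - B * Real.sqrt n) ^ k / (Nat.factorial k)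
          else (((n : ℝ) - B * Real.sqrt n) ^ n / (Nat.factorial n)) *
            (((n : ℝ) - B * Real.sqrt n) / n) ^ (k - n)) *
          (Nat.factorial n) / ((n : ℝ) - B * Real.sqrt n) ^ n ≤
        (1 + (n : ℝ) ^ (-(1 / 4 : ℝ))) * Real.exp (B ^ 2) := by
  set C : ℝ := 2 * B ^ 3 + 3 * B with hC
  have hCpos : 0 < C := by positivity
  refine ⟨⌈C ^ 4⌉₊ + 1, fun n hn hpos k => ?_⟩
  have hn1 : 1 ≤ n := by omega
  have hnR : (1:ℝ) ≤ (n:ℝ) := by exact_mod_cast hn1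
  have hnpos : (0:ℝ) < n := by linarith
  set s : ℝ := Real.sqrt n with hs
  set lam : ℝ := (n:ℝ) - B * s with hlam
  have hs2 : s ^ 2 = (n:ℝ) := Real.sq_sqrt hnpos.le
  have hspos : 0 < s := Real.sqrt_pos.mpr hnpos
  have hsB : B < s := by nlinarith [hpos]
  have hlampos : 0 < lam := hpos
  have hlamn : lam ≤ (n:ℝ) := by nlinarith
  -- n ^ (1/4)
  have hCn : C ≤ (n:ℝ) ^ ((1:ℝ)/4) := by
    have h1 : C ^ 4 ≤ (n:ℝ) := by
      calc C ^ 4 ≤ (⌈C ^ 4⌉₊ : ℝ) := Nat.le_ceil _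
        _ ≤ (n:ℝ) := by exact_mod_cast Nat.le_of_lt (by omega)
    calc C = (C ^ (4:ℕ)) ^ ((1:ℝ)/4) := by
          rw [← Real.rpow_natCast C 4, ← Real.rpow_mul hCpos.le]
          norm_num
      _ ≤ (n:ℝ) ^ ((1:ℝ)/4) := by
          apply Real.rpow_le_rpow (by positivity) h1 (by norm_num)
  set x : ℝ := (n:ℝ) ^ (-(1/4 : ℝ)) with hx
  have hxpos : 0 < x := Real.rpow_pos_of_pos hnpos _
  have hx1 : x ≤ 1 := Real.rpow_le_one_of_one_le_of_nonpos hnR (by norm_num)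
  have hxs : x * s = (n:ℝ) ^ ((1:ℝ)/4) := by
    rw [hx, hs, Real.sqrt_eq_rpow, ← Real.rpow_add hnpos]
    norm_num
  -- key log bound
  have hlog : (B ^ 3 + B) / (s - B) ≤ Real.log (1 + x) := by
    have h1 : Real.log (1 + x) ≥ x / 2 := by
      have h2 : Real.log (1/(1+x)) ≤ 1/(1+x) - 1 := Real.log_le_sub_one_of_pos (by positivity)
      rw [one_div, Real.log_inv] at h2
      have h3 : x / (1 + x) ≤ Real.log (1 + x) := by
        have : 1 - (1+x)⁻¹ = x / (1+x) := by field_simp; ring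
        linarith [h2, this.symm.le]
      have h4 : x / 2 ≤ x / (1 + x) := by
        apply div_le_div_of_nonneg_left hxpos.le (by positivity) (by linarith)
      linarith
    have h5 : (B ^ 3 + B) / (s - B) ≤ x / 2 := by
      rw [div_le_div_iff₀ (by linarith) (by norm_num)]
      have h6 : x * (s - B) = x * s - x * B := by ring
      have h7 : x * B ≤ B := by nlinarith
      nlinarith [hxs, hCn]
    linarith
  have hne : ((Nat.factorial n : ℝ)) ≠ 0 := by
    exact_mod_cast n.factorial_pos.ne'
  have hlamne : lam ^ n ≠ 0 := (pow_pos hlampos n).ne'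
  have hRHS1 : (1:ℝ) ≤ (1 + x) * Real.exp (B ^ 2) := by
    nlinarith [Real.one_le_exp (show (0:ℝ) ≤ B ^ 2 by positivity), hxpos]
  by_cases hk : k ≤ n
  · rw [if_pos hk]
    set m : ℕ := ⌊lam⌋₊ with hm
    have hmn : m ≤ n := by
      have : lam ≤ (n:ℝ) := hlamn
      calc m = ⌊lam⌋₊ := rfl
        _ ≤ ⌊(n:ℝ)⌋₊ := Nat.floor_le_floor this
        _ = n := Nat.floor_natCast n
    have hml : (m:ℝ) ≤ lam := Nat.floor_le hlampos.le
    have hml1 : lam < m + 1 := Nat.lt_floor_add_one lam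
    have step1 : lam ^ k / (Nat.factorial k) ≤ lam ^ m / (Nat.factorial m) :=
      aux_pois lam hlampos k
    have step2 : lam ^ m / (Nat.factorial m) * (Nat.factorial n) / lam ^ n
        ≤ ((n:ℝ) / lam) ^ (n - m) := by
      have hf : ((Nat.factorial n : ℝ)) ≤ (Nat.factorial m) * (n:ℝ) ^ (n - m) := by
        have := aux_fact m n hmn
        exact_mod_cast this
      have hsplit : lam ^ n = lam ^ m * lam ^ (n - m) := by
        rw [← pow_add, Nat.add_sub_cancel' hmn]
      rw [div_pow, hsplit]
      rw [div_mul_eq_mul_div, div_div]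
      rw [div_le_div_iff₀ (by positivity) (by positivity)]
      have hmf : (0:ℝ) < (Nat.factorial m) := by exact_mod_cast m.factorial_pos
      calc lam ^ m * (Nat.factorial n) * lam ^ (n - m)
          ≤ lam ^ m * ((Nat.factorial m) * (n:ℝ) ^ (n - m)) * lam ^ (n - m) := by
            apply mul_le_mul_of_nonneg_right _ (by positivity)
            exact mul_le_mul_of_nonneg_left hf (by positivity)
        _ = (n:ℝ) ^ (n - m) * ((Nat.factorial m) * (lam ^ m * lam ^ (n - m))) := by ring
    have step3 : ((n:ℝ) / lam) ^ (n - m) ≤ Real.exp (B ^ 2 + Real.log (1 + x)) := by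
      set j : ℕ := n - m with hj
      have hjle : (j:ℝ) ≤ B * s + 1 := by
        have hcast : (j:ℝ) = (n:ℝ) - (m:ℝ) := by
          rw [hj]; push_cast [Nat.cast_sub hmn]; ring
        rw [hcast]; linarith [hml1]
      set t : ℝ := B * s / lam with ht
      have htpos : 0 < t := by positivity
      have hdiv : (n:ℝ) / lam = 1 + t := by
        rw [ht]; field_simp; rw [hlam]; ring
      rw [hdiv]
      calc (1 + t) ^ j ≤ (Real.exp t) ^ j := by
            apply pow_le_pow_left₀ (by linarith) (by linarith [Real.add_one_le_exp t])
        _ = Real.exp (t * j) := by rw [← Real.exp_nat_mul, mul_comm]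
        _ ≤ Real.exp (B ^ 2 + Real.log (1 + x)) := by
            apply Real.exp_le_exp.mpr
            have h1 : t * j ≤ t * (B * s + 1) := by
              apply mul_le_mul_of_nonneg_left hjle htpos.le
            have h2 : t * (B * s + 1) = B ^ 2 + (B ^ 3 + B) / (s - B) := by
              have hlamfac : lam = s * (s - B) := by rw [hlam]; nlinarith [hs2]
              have ht2 : t = B / (s - B) := by
                rw [ht, hlamfac, div_eq_div_iff (mul_pos hspos (by linarith : (0:ℝ) < s - B)).ne' (by linarith : (0:ℝ) < s - B).ne']
                ring
              rw [ht2]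
              have hsB' : s - B ≠ 0 := by linarith
              field_simp
              ring
            linarith [hlog]
    have hfinal : Real.exp (B ^ 2 + Real.log (1 + x)) = (1 + x) * Real.exp (B ^ 2) := by
      rw [Real.exp_add, Real.exp_log (by positivity)]; ring
    calc lam ^ k / (Nat.factorial k) * (Nat.factorial n) / lam ^ n
        ≤ lam ^ m / (Nat.factorial m) * (Nat.factorial n) / lam ^ n := by
          apply div_le_div_of_nonneg_right _ (by positivity)
          · exact mul_le_mul_of_nonneg_right step1 (by positivity)
      _ ≤ ((n:ℝ) / lam) ^ (n - m) := step2
      _ ≤ Real.exp (B ^ 2 + Real.log (1 + x)) := step3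
      _ = (1 + x) * Real.exp (B ^ 2) := hfinal
  · rw [if_neg hk]
    have heq : lam ^ n / (Nat.factorial n) * (lam / n) ^ (k - n) * (Nat.factorial n) / lam ^ n
        = (lam / n) ^ (k - n) := by
      field_simp
    rw [heq]
    have h1 : (lam / n) ^ (k - n) ≤ 1 := by
      apply pow_le_one₀ (by positivity)
      rw [div_le_one hnpos]
      exact hlamn
    linarith
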